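/- For every real a > 0, the median of X_a lies strictly in the interval (a - 1/3, a), where X_a has the gamma distribution with shape a and scale 1. That is, Γ(a, a)/Γ(a) < 1/2 < Γ(a, a - 1/3)/Γ(a) (the second inequality when a > 1/3, and the median is ≥ a - 1/3 trivially otherwise). -/

import Mathlib

open Real MeasureTheory Set Filter

noncomputable def uIG (a x : ℝ) : ℝ := ∫ t in Set.Ioi x, t ^ (a - 1) * Real.exp (-t)

namespace Stmt5Aux

lemma integ_phi {a : ℝ} (ha : 0 < a) :
    IntegrableOn (fun t : ℝ => t ^ (a - 1) * Real.exp (-t)) (Ioi 0) :=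
  (Real.GammaIntegral_convergent ha).congr_fun (fun x _ => mul_comm _ _) measurableSet_Ioi

lemma Gamma_eq {a : ℝ} (ha : 0 < a) :
    Real.Gamma a = ∫ t in Ioi (0:ℝ), t ^ (a - 1) * Real.exp (-t) := by
  rw [Real.Gamma_eq_integral ha]
  congr 1; ext t; ring

lemma setIntegral_lt {F G : ℝ → ℝ} {s : Set ℝ} (hs : MeasurableSet s)
    (hμ : volume s ≠ 0) (hF : IntegrableOn F s) (hG : IntegrableOn G s)
    (h : ∀ x ∈ s, F x < G x) : ∫ x in s, F x < ∫ x in s, G x := by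
  have hsub : IntegrableOn (fun x => G x - F x) s := hG.sub hF
  have hpos : 0 < ∫ x in s, (G x - F x) := by
    rw [setIntegral_pos_iff_support_of_nonneg_ae ?_ hsub]
    · have hsupp : s ⊆ Function.support (fun x => G x - F x) :=
        fun x hx => sub_ne_zero.2 (h x hx).ne'
      have : (Function.support (fun x => G x - F x)) ∩ s = s :=
        inter_eq_right.2 hsupp
      rw [this]
      exact hμ.bot_lt
    · exact Filter.eventually_of_mem (self_mem_ae_restrict hs)
        (fun x hx => sub_nonneg.2 (h x hx).le)
  have := integral_sub hG hF
  rw [this] at hpos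
  linarith


lemma img1 {a : ℝ} (ha : 0 < a) : (fun w => a * Real.exp w) '' Ioi 0 = Ioi a := by
  ext x
  simp only [mem_image, mem_Ioi]
  constructor
  · rintro ⟨w, hw, rfl⟩
    have h1 : 1 < Real.exp w := Real.one_lt_exp_iff.2 hw
    nlinarith
  · intro hx
    have hxa : 1 < x / a := (one_lt_div ha).2 hx
    refine ⟨Real.log (x / a), Real.log_pos hxa, ?_⟩
    rw [Real.exp_log (by linarith : (0:ℝ) < x / a)]
    field_simp

lemma img2 {a : ℝ} (ha : 0 < a) : (fun w => a * Real.exp (-w)) '' Ioi 0 = Ioo 0 a := by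
  ext x
  simp only [mem_image, mem_Ioi, mem_Ioo]
  constructor
  · rintro ⟨w, hw, rfl⟩
    have h1 : Real.exp (-w) < 1 := Real.exp_lt_one_iff.2 (by linarith)
    have h2 : 0 < Real.exp (-w) := Real.exp_pos _
    constructor <;> nlinarith
  · rintro ⟨hx0, hxa⟩
    have hxa' : 1 < a / x := (one_lt_div hx0).2 hxa
    refine ⟨Real.log (a / x), Real.log_pos hxa', ?_⟩
    rw [← Real.log_inv, Real.exp_log (by positivity)]
    field_simp

lemma scalar_eq {a : ℝ} (ha : 0 < a) (u : ℝ) :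
    (a * Real.exp u) * ((a * Real.exp u) ^ (a - 1) * Real.exp (-(a * Real.exp u)))
      = a ^ a * Real.exp (a * u - a * Real.exp u) := by
  have he : (0:ℝ) < Real.exp u := Real.exp_pos u
  rw [Real.mul_rpow ha.le he.le, Real.rpow_def_of_pos he, Real.log_exp]
  rw [show a ^ a = a ^ (1:ℝ) * a ^ (a-1) by
    rw [← Real.rpow_add ha]; norm_num, Real.rpow_one]
  rw [show Real.exp (a * u - a * Real.exp u)
      = Real.exp u * (Real.exp (u * (a-1)) * Real.exp (-(a * Real.exp u))) by
    rw [← Real.exp_add, ← Real.exp_add]; ring_nf]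
  ring

lemma lemA {a : ℝ} (ha : 0 < a) :
    ∫ t in Ioi a, t ^ (a - 1) * Real.exp (-t)
      < ∫ t in Ioc (0:ℝ) a, t ^ (a - 1) * Real.exp (-t) := by
  have hphi : IntegrableOn (fun t : ℝ => t ^ (a - 1) * Real.exp (-t)) (Ioi 0) :=
    (Real.GammaIntegral_convergent ha).congr_fun (fun x _ => mul_comm _ _) measurableSet_Ioi
  rw [integral_Ioc_eq_integral_Ioo]
  -- derivatives
  have hd1 : ∀ w ∈ Ioi (0:ℝ), HasDerivWithinAt (fun w => a * Real.exp w)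
      (a * Real.exp w) (Ioi 0) w := fun w _ =>
    ((Real.hasDerivAt_exp w).const_mul a).hasDerivWithinAt
  have hd2 : ∀ w ∈ Ioi (0:ℝ), HasDerivWithinAt (fun w => a * Real.exp (-w))
      (-(a * Real.exp (-w))) (Ioi 0) w := fun w _ => by
    have h := (((hasDerivAt_id w).neg).exp).const_mul a
    simpa [mul_comm, mul_assoc, mul_left_comm] using h.hasDerivWithinAt
  have hinj1 : InjOn (fun w => a * Real.exp w) (Ioi 0) := by
    intro x _ y _ h
    exact Real.exp_injective (mul_left_cancel₀ ha.ne' h)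
  have hinj2 : InjOn (fun w => a * Real.exp (-w)) (Ioi 0) := by
    intro x _ y _ h
    exact neg_injective (Real.exp_injective (mul_left_cancel₀ ha.ne' h))
  have him1 := integral_image_eq_integral_abs_deriv_smul measurableSet_Ioi hd1 hinj1
      (fun t => t ^ (a - 1) * Real.exp (-t))
  have him2 := integral_image_eq_integral_abs_deriv_smul measurableSet_Ioi hd2 hinj2
      (fun t => t ^ (a - 1) * Real.exp (-t))
  rw [img1 ha] at him1
  rw [img2 ha] at him2
  rw [him1, him2]
  have hint1 : IntegrableOn (fun w => |a * Real.exp w| •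
      ((a * Real.exp w) ^ (a - 1) * Real.exp (-(a * Real.exp w)))) (Ioi 0) := by
    refine (integrableOn_image_iff_integrableOn_abs_deriv_smul measurableSet_Ioi hd1 hinj1
      (fun t => t ^ (a - 1) * Real.exp (-t))).1 ?_
    rw [img1 ha]
    exact hphi.mono_set (Ioi_subset_Ioi ha.le)
  have hint2 : IntegrableOn (fun w => |(-(a * Real.exp (-w)))| •
      ((a * Real.exp (-w)) ^ (a - 1) * Real.exp (-(a * Real.exp (-w))))) (Ioi 0) := by
    refine (integrableOn_image_iff_integrableOn_abs_deriv_smul measurableSet_Ioi hd2 hinj2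
      (fun t => t ^ (a - 1) * Real.exp (-t))).1 ?_
    rw [img2 ha]
    exact hphi.mono_set Ioo_subset_Ioi_self
  refine setIntegral_lt measurableSet_Ioi (by simp) hint1 hint2 ?_
  intro w hw
  have hw0 : (0:ℝ) < w := hw
  have h1 : (0:ℝ) < a * Real.exp w := by positivity
  have h2 : (0:ℝ) < a * Real.exp (-w) := by positivity
  rw [abs_neg, abs_of_pos h1, abs_of_pos h2, smul_eq_mul, smul_eq_mul,
    scalar_eq ha w, scalar_eq ha (-w)]
  have hsinh : w < Real.sinh w := by
    rwa [Real.self_lt_sinh_iff]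
  rw [Real.sinh_eq] at hsinh
  have hexp : a * w - a * Real.exp w < a * (-w) - a * Real.exp (-w) := by
    have h3 : 2 * w < Real.exp w - Real.exp (-w) := by linarith
    nlinarith
  have hlt := Real.exp_lt_exp.2 hexp
  have hpow : (0:ℝ) < a ^ a := Real.rpow_pos_of_pos ha a
  nlinarith


lemma cube_cuberoot {t : ℝ} (ht : 0 ≤ t) : (t ^ ((1:ℝ)/3)) ^ (3:ℕ) = t := by
  rw [← Real.rpow_natCast (t ^ ((1:ℝ)/3)) 3, ← Real.rpow_mul ht]
  norm_num

lemma cuberoot_cube {x : ℝ} (hx : 0 ≤ x) : (x ^ (3:ℕ)) ^ ((1:ℝ)/3) = x := by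
  rw [← Real.rpow_natCast x 3, ← Real.rpow_mul hx]
  norm_num

lemma img3 {μ : ℝ} (hμ : 0 < μ) :
    (fun s => (μ - s) ^ (3:ℕ)) '' Ioo 0 μ = Ioo 0 (μ ^ (3:ℕ)) := by
  ext t
  simp only [mem_image, mem_Ioo]
  constructor
  · rintro ⟨s, ⟨hs0, hsμ⟩, rfl⟩
    exact ⟨pow_pos (by linarith) 3, pow_lt_pow_left₀ (by linarith) (by linarith) (by norm_num)⟩
  · rintro ⟨ht0, htμ⟩
    have hr0 : 0 < t ^ ((1:ℝ)/3) := Real.rpow_pos_of_pos ht0 _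
    have hrμ : t ^ ((1:ℝ)/3) < μ := by
      have h := Real.rpow_lt_rpow ht0.le htμ (by norm_num : (0:ℝ) < 1/3)
      rwa [cuberoot_cube hμ.le] at h
    refine ⟨μ - t ^ ((1:ℝ)/3), ⟨by linarith, by linarith⟩, ?_⟩
    have : μ - (μ - t ^ ((1:ℝ)/3)) = t ^ ((1:ℝ)/3) := by ring
    rw [this, cube_cuberoot ht0.le]

lemma img4 {μ : ℝ} (hμ : 0 < μ) :
    (fun s => (μ + s) ^ (3:ℕ)) '' Ioo 0 μ = Ioo (μ ^ (3:ℕ)) (8 * μ ^ (3:ℕ)) := by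
  have h8 : (8:ℝ) * μ ^ (3:ℕ) = (2*μ) ^ (3:ℕ) := by ring
  ext t
  simp only [mem_image, mem_Ioo]
  constructor
  · rintro ⟨s, ⟨hs0, hsμ⟩, rfl⟩
    refine ⟨pow_lt_pow_left₀ (by linarith) hμ.le (by norm_num), ?_⟩
    rw [h8]
    exact pow_lt_pow_left₀ (by linarith) (by linarith) (by norm_num)
  · rintro ⟨ht0, htμ⟩
    have ht0' : (0:ℝ) < t := lt_trans (pow_pos hμ 3) ht0
    have hrμ : μ < t ^ ((1:ℝ)/3) := by
      have h := Real.rpow_lt_rpow (pow_pos hμ 3).le ht0 (by norm_num : (0:ℝ) < 1/3)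
      rwa [cuberoot_cube hμ.le] at h
    have hr2μ : t ^ ((1:ℝ)/3) < 2*μ := by
      rw [h8] at htμ
      have h := Real.rpow_lt_rpow ht0'.le htμ (by norm_num : (0:ℝ) < 1/3)
      rwa [cuberoot_cube (by linarith : (0:ℝ) ≤ 2*μ)] at h
    refine ⟨t ^ ((1:ℝ)/3) - μ, ⟨by linarith, by linarith⟩, ?_⟩
    have : μ + (t ^ ((1:ℝ)/3) - μ) = t ^ ((1:ℝ)/3) := by ring
    rw [this, cube_cuberoot ht0'.le]

lemma psi_pos {μ s : ℝ} (hμ : 0 < μ) (hs : 0 < s) (hsμ : s < μ) :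
    0 < 3*μ^3*(Real.log (μ + s) - Real.log (μ - s)) - 6*μ^2*s - 2*s^3 := by
  set ψ : ℝ → ℝ := fun x => 3*μ^3*(Real.log (μ + x) - Real.log (μ - x)) - 6*μ^2*x - 2*x^3
    with hψdef
  have hmono : StrictMonoOn ψ (Ico 0 μ) := by
    apply strictMonoOn_of_deriv_pos (convex_Ico 0 μ)
    · have c1 : ContinuousOn (fun x => Real.log (μ + x)) (Ico 0 μ) :=
        ContinuousOn.log (by fun_prop)
          (fun x hx => by have := hx.1; intro h; nlinarith [hx.1])
      have c2 : ContinuousOn (fun x => Real.log (μ - x)) (Ico 0 μ) :=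
        ContinuousOn.log (by fun_prop)
          (fun x hx => by have := hx.2; intro h; nlinarith [hx.2])
      apply ContinuousOn.sub
      apply ContinuousOn.sub
      · exact continuousOn_const.mul (c1.sub c2)
      · fun_prop
      · fun_prop
    · intro x hx
      rw [interior_Ico] at hx
      obtain ⟨hx0, hxμ⟩ := hx
      have h1 : (0:ℝ) < μ + x := by linarith
      have h2 : (0:ℝ) < μ - x := by linarith
      have hl1 : HasDerivAt (fun x => Real.log (μ + x)) (1/(μ + x)) x := by
        have := ((hasDerivAt_id x).const_add μ).log (by positivity)
        simpa using this
      have hl2 : HasDerivAt (fun x => Real.log (μ - x)) ((-1)/(μ - x)) x := by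
        have := ((hasDerivAt_id x).const_sub μ).log h2.ne'
        simpa using this
      have hp : HasDerivAt (fun x : ℝ => x ^ (3:ℕ)) (3*x^2) x := by
        simpa using hasDerivAt_pow 3 x
      have hd : HasDerivAt ψ
          (3*μ^3*(1/(μ + x) - (-1)/(μ - x)) - 6*μ^2*1 - 2*(3*x^2)) x := by
        have hx3 : HasDerivAt (fun x : ℝ => x ^ 3) (3*x^2) x := hp
        exact (((hl1.sub hl2).const_mul (3*μ^3)).sub
          ((hasDerivAt_id x).const_mul (6*μ^2))).sub (hx3.const_mul 2)
      rw [hd.deriv]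
      have key : 3*μ^3*(1/(μ + x) - (-1)/(μ - x)) - 6*μ^2*1 - 2*(3*x^2)
          = 6*x^4 / ((μ + x)*(μ - x)) := by
        field_simp
        ring
      rw [key]
      positivity
  have h0 : ψ 0 = 0 := by simp [hψdef]
  have hlt := hmono (left_mem_Ico.2 hμ) ⟨hs.le, hsμ⟩ hs
  rwa [h0] at hlt

lemma scalarB {a x : ℝ} (hx : 0 < x) :
    3*x^2 * ((x ^ (3:ℕ)) ^ (a - 1) * Real.exp (-(x ^ (3:ℕ))))
      = 3 * Real.exp ((3*(a-1) + 2) * Real.log x - x ^ (3:ℕ)) := by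
  have h3 : (0:ℝ) < x ^ (3:ℕ) := pow_pos hx 3
  rw [Real.rpow_def_of_pos h3, Real.log_pow]
  have hx2 : x^2 = Real.exp (2 * Real.log x) := by
    rw [← Real.exp_log (pow_pos hx 2), Real.log_pow]
    norm_num
  rw [hx2,
    show (3:ℝ) * Real.exp ((3*(a-1) + 2) * Real.log x - x ^ (3:ℕ))
      = 3 * (Real.exp (2 * Real.log x) *
        (Real.exp (((3:ℕ):ℝ) * Real.log x * (a - 1)) * Real.exp (-(x ^ (3:ℕ))))) from by
      rw [← Real.exp_add, ← Real.exp_add]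
      congr 1
      push_cast
      ring]
  ring

lemma lemB {a : ℝ} (ha : 1/3 < a) :
    ∫ t in Ioc (0:ℝ) (a - 1/3), t ^ (a - 1) * Real.exp (-t)
      < ∫ t in Ioi (a - 1/3), t ^ (a - 1) * Real.exp (-t) := by
  have ha0 : (0:ℝ) < a := by linarith
  set c : ℝ := a - 1/3 with hcdef
  have hc0 : 0 < c := by rw [hcdef]; linarith
  set μ : ℝ := c ^ ((1:ℝ)/3) with hμdef
  have hμ : 0 < μ := Real.rpow_pos_of_pos hc0 _
  have hμ3 : μ ^ (3:ℕ) = c := cube_cuberoot hc0.le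
  have hphi : IntegrableOn (fun t : ℝ => t ^ (a - 1) * Real.exp (-t)) (Ioi 0) := integ_phi ha0
  rw [integral_Ioc_eq_integral_Ioo]
  have hd1 : ∀ s ∈ Ioo (0:ℝ) μ, HasDerivWithinAt (fun s => (μ - s) ^ (3:ℕ))
      (-(3*(μ - s)^2)) (Ioo 0 μ) s := by
    intro s _
    have h := ((hasDerivAt_id s).const_sub μ).pow 3
    simpa [mul_comm, mul_assoc, mul_left_comm, Pi.pow_def] using h.hasDerivWithinAt
  have hd2 : ∀ s ∈ Ioo (0:ℝ) μ, HasDerivWithinAt (fun s => (μ + s) ^ (3:ℕ))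
      (3*(μ + s)^2) (Ioo 0 μ) s := by
    intro s _
    have h := ((hasDerivAt_id s).const_add μ).pow 3
    simpa [mul_comm, mul_assoc, mul_left_comm, Pi.pow_def] using h.hasDerivWithinAt
  have hcube : Function.Injective (fun x : ℝ => x ^ (3:ℕ)) :=
    (Odd.strictMono_pow (R := ℝ) (⟨1, by norm_num⟩ : Odd 3)).injective
  have hinj1 : InjOn (fun s => (μ - s) ^ (3:ℕ)) (Ioo 0 μ) := by
    intro x _ y _ h
    have h2 := hcube h
    linarith
  have hinj2 : InjOn (fun s => (μ + s) ^ (3:ℕ)) (Ioo 0 μ) := by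
    intro x _ y _ h
    have h2 := hcube h
    linarith
  have him1 := integral_image_eq_integral_abs_deriv_smul measurableSet_Ioo hd1 hinj1
      (fun t => t ^ (a - 1) * Real.exp (-t))
  have him2 := integral_image_eq_integral_abs_deriv_smul measurableSet_Ioo hd2 hinj2
      (fun t => t ^ (a - 1) * Real.exp (-t))
  rw [img3 hμ, hμ3] at him1
  rw [img4 hμ, hμ3] at him2
  rw [him1]
  have hvol : volume (Ioo (0:ℝ) μ) ≠ 0 := by
    rw [Real.volume_Ioo]
    exact (ENNReal.ofReal_pos.2 (by linarith)).ne'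
  have hint1 : IntegrableOn (fun s => |(-(3*(μ - s)^2))| •
      (((μ - s) ^ (3:ℕ)) ^ (a - 1) * Real.exp (-((μ - s) ^ (3:ℕ))))) (Ioo 0 μ) := by
    refine (integrableOn_image_iff_integrableOn_abs_deriv_smul measurableSet_Ioo hd1 hinj1
      (fun t => t ^ (a - 1) * Real.exp (-t))).1 ?_
    rw [img3 hμ, hμ3]
    exact hphi.mono_set Ioo_subset_Ioi_self
  have hint2 : IntegrableOn (fun s => |3*(μ + s)^2| •
      (((μ + s) ^ (3:ℕ)) ^ (a - 1) * Real.exp (-((μ + s) ^ (3:ℕ))))) (Ioo 0 μ) := by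
    refine (integrableOn_image_iff_integrableOn_abs_deriv_smul measurableSet_Ioo hd2 hinj2
      (fun t => t ^ (a - 1) * Real.exp (-t))).1 ?_
    rw [img4 hμ, hμ3]
    exact hphi.mono_set (fun x hx => lt_trans hc0 hx.1)
  have hstep : (∫ s in Ioo (0:ℝ) μ, |(-(3*(μ - s)^2))| •
        (((μ - s) ^ (3:ℕ)) ^ (a - 1) * Real.exp (-((μ - s) ^ (3:ℕ)))))
      < ∫ s in Ioo (0:ℝ) μ, |3*(μ + s)^2| •
        (((μ + s) ^ (3:ℕ)) ^ (a - 1) * Real.exp (-((μ + s) ^ (3:ℕ)))) := by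
    refine setIntegral_lt measurableSet_Ioo hvol hint1 hint2 ?_
    intro s hs
    obtain ⟨hs0, hsμ⟩ := hs
    have hx : (0:ℝ) < μ - s := by linarith
    have hy : (0:ℝ) < μ + s := by linarith
    rw [abs_neg, abs_of_pos (by positivity : (0:ℝ) < 3*(μ - s)^2),
      abs_of_pos (by positivity : (0:ℝ) < 3*(μ + s)^2), smul_eq_mul, smul_eq_mul,
      scalarB hx, scalarB hy]
    have hψ := psi_pos hμ hs0 hsμ
    have hc3 : 3*(a-1) + 2 = 3*μ^3 := by
      rw [show μ^3 = μ^(3:ℕ) from rfl, hμ3, hcdef]; ring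
    have hring : (μ + s)^(3:ℕ) - (μ - s)^(3:ℕ) = 6*μ^2*s + 2*s^3 := by ring
    have harg : (3*(a-1) + 2) * Real.log (μ - s) - (μ - s) ^ (3:ℕ)
        < (3*(a-1) + 2) * Real.log (μ + s) - (μ + s) ^ (3:ℕ) := by
      rw [hc3]
      nlinarith [hψ, hring]
    have := Real.exp_lt_exp.2 harg
    linarith
  refine lt_of_lt_of_le (lt_of_lt_of_eq hstep him2.symm) ?_
  refine setIntegral_mono_set (hphi.mono_set (fun x hx => lt_trans hc0 hx)) ?_ ?_
  · refine Filter.eventually_of_mem (self_mem_ae_restrict measurableSet_Ioi) ?_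
    intro x hx
    have hx0 : (0:ℝ) < x := lt_trans hc0 hx
    positivity
  · exact HasSubset.Subset.eventuallyLE (fun x hx => hx.1)

lemma split {a c : ℝ} (ha : 0 < a) (hc : 0 ≤ c) :
    Real.Gamma a = (∫ t in Ioc (0:ℝ) c, t ^ (a - 1) * Real.exp (-t)) + uIG a c := by
  rw [Gamma_eq ha, uIG, ← setIntegral_union (Ioc_disjoint_Ioi le_rfl) measurableSet_Ioi
    ((integ_phi ha).mono_set Ioc_subset_Ioi_self)
    ((integ_phi ha).mono_set (Ioi_subset_Ioi hc)), Ioc_union_Ioi_eq_Ioi hc]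

end Stmt5Aux

theorem stmt5 (a : ℝ) (ha : 0 < a) :
    uIG a a / Real.Gamma a < 1/2 ∧ (1/3 < a → 1/2 < uIG a (a - 1/3) / Real.Gamma a) := by
  have hΓ : 0 < Real.Gamma a := Real.Gamma_pos_of_pos ha
  constructor
  · have hsplit := Stmt5Aux.split ha ha.le
    have h := Stmt5Aux.lemA ha
    rw [div_lt_iff₀ hΓ]
    have huIG : uIG a a = ∫ t in Ioi a, t ^ (a - 1) * Real.exp (-t) := rfl
    rw [huIG]
    linarith
  · intro h13
    have hsplit := Stmt5Aux.split ha (by linarith : (0:ℝ) ≤ a - 1/3)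
    have h := Stmt5Aux.lemB h13
    rw [lt_div_iff₀ hΓ]
    have huIG : uIG a (a - 1/3) = ∫ t in Ioi (a - 1/3), t ^ (a - 1) * Real.exp (-t) := rfl
    rw [huIG]
    linarith
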